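/- arXiv:1512.01077 — 6 statements merged into one kernel-verified Lean document; each statement's English description precedes it below -/
import Mathlib

section
/- Let G be a graph whose vertex set is partitioned into cliques C_1, ..., C_{k+n} where k = γ(G) is the domination number. Let l < k+n, choose cliques C_{i_1},...,C_{i_l}, and let D be a smallest set of vertices of V(G) \ (C_{i_1} ∪ ... ∪ C_{i_l}) that dominates C_{i_1} ∪ ... ∪ C_{i_l}. If C_{j_1},...,C_{j_t} are the cliques of the partition having nonempty intersection with D, then Σ_{m=1}^{t} (|C_{j_m} ∩ D| - 1) ≥ l - n. -/
open Finset

/-- `S` dominates `T`: every vertex of `T` is in the closed neighborhood of `S`. -/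
def Dominates {V : Type*} (G : SimpleGraph V) (S T : Set V) : Prop :=
  ∀ t ∈ T, ∃ s ∈ S, s = t ∨ G.Adj s t

/-- The domination number of a finite graph. -/
noncomputable def domNum {V : Type*} [Fintype V] (G : SimpleGraph V) : ℕ :=
  sInf {n | ∃ D : Finset V, D.card = n ∧ Dominates G ↑D Set.univ}

/-- A partition of the vertex set of `G` into `m` cliques. -/
structure CliquePartition {V : Type*} (G : SimpleGraph V) (m : ℕ) where
  parts : Fin m → Finset V
  disj : ∀ i j, i ≠ j → Disjoint (parts i) (parts j)
  cover : ∀ v, ∃ i, v ∈ parts i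
  clique : ∀ i, G.IsClique ↑(parts i)

/-- Lemma 1 (Bartsalkin–German pigeonhole lemma, generalized):
if `D` is a smallest set disjoint from the chosen cliques `C_{i₁},…,C_{i_l}`
dominating their union, and `J` is the set of cliques meeting `D`, then
`∑_{j ∈ J} (|C_j ∩ D| - 1) ≥ l - n`. -/
theorem stmt0 {V : Type*} [Fintype V] [DecidableEq V] (G : SimpleGraph V) (k n : ℕ)
    (hk : domNum G = k) (P : CliquePartition G (k + n))
    (l : ℕ) (hl : l < k + n) (I : Fin l → Fin (k + n)) (hI : Function.Injective I)
    (D : Finset V)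
    (hDdisj : ∀ a : Fin l, Disjoint D (P.parts (I a)))
    (hDdom : Dominates G ↑D ↑((Finset.univ : Finset (Fin l)).biUnion fun a => P.parts (I a)))
    (hDmin : ∀ D' : Finset V,
      (∀ a : Fin l, Disjoint D' (P.parts (I a))) →
      Dominates G ↑D' ↑((Finset.univ : Finset (Fin l)).biUnion fun a => P.parts (I a)) →
      D.card ≤ D'.card) :
    (∑ j ∈ (Finset.univ.filter fun j : Fin (k + n) => (P.parts j ∩ D).Nonempty),
        ((P.parts j ∩ D).card - 1 : ℤ)) ≥ (l : ℤ) - n := by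
  classical
  set J := (Finset.univ.filter fun j : Fin (k + n) => (P.parts j ∩ D).Nonempty) with hJdef
  -- D.card = sum of intersection cards over J
  have hDcard : (D.card : ℤ) = ∑ j ∈ J, ((P.parts j ∩ D).card : ℤ) := by
    have h1 : D = J.biUnion (fun j => P.parts j ∩ D) := by
      ext v
      simp only [hJdef, Finset.mem_biUnion, mem_filter, mem_univ, true_and, Finset.mem_inter]
      constructor
      · intro hv
        obtain ⟨j, hj⟩ := P.cover v
        exact ⟨j, ⟨v, Finset.mem_inter.mpr ⟨hj, hv⟩⟩, hj, hv⟩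
      · rintro ⟨j, _, _, hv⟩; exact hv
    have h2 : D.card = ∑ j ∈ J, (P.parts j ∩ D).card := by
      conv_lhs => rw [h1]
      exact Finset.card_biUnion fun i hi j hj hij =>
        (P.disj i j hij).mono Finset.inter_subset_left Finset.inter_subset_left
    rw [h2, Nat.cast_sum]
  have hsum : ∑ j ∈ J, ((P.parts j ∩ D).card - 1 : ℤ)
      = (D.card : ℤ) - (J.card : ℤ) := by
    rw [Finset.sum_sub_distrib, Finset.sum_const, ← hDcard]
    simp
  rw [hsum]
  -- build auxiliary dominating set
  let S := Finset.univ.filter fun j : Fin (k + n) =>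
    j ∉ J ∧ (¬ ∃ a, I a = j) ∧ (P.parts j).Nonempty
  let f : Fin (k + n) → Finset V := fun j =>
    if h : (P.parts j).Nonempty then {h.choose} else ∅
  let D' := D ∪ S.biUnion f
  have hDomD' : Dominates G ↑D' Set.univ := by
    intro t _
    obtain ⟨j, hj⟩ := P.cover t
    by_cases hch : ∃ a, I a = j
    · obtain ⟨a, rfl⟩ := hch
      obtain ⟨s, hs, hst⟩ := hDdom t (by
        simp only [Finset.coe_biUnion, Finset.coe_univ, Set.mem_iUnion, Finset.mem_coe]
        exact ⟨a, Set.mem_univ a, hj⟩)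
      exact ⟨s, by simp only [D', Finset.coe_union, Set.mem_union]; exact Or.inl hs, hst⟩
    · by_cases hJj : j ∈ J
      · have hne : (P.parts j ∩ D).Nonempty := by
          simpa [hJdef] using hJj
        obtain ⟨d, hd⟩ := hne
        have hdP := (Finset.mem_inter.mp hd).1
        have hdD := (Finset.mem_inter.mp hd).2
        refine ⟨d, by simp only [D', Finset.coe_union, Set.mem_union]; exact Or.inl hdD, ?_⟩
        by_cases hdt : d = t
        · exact Or.inl hdt
        · exact Or.inr (P.clique j hdP hj hdt)
      · have hne : (P.parts j).Nonempty := ⟨t, hj⟩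
        have hfS : j ∈ S := by
          simp only [S, mem_filter, mem_univ, true_and]
          exact ⟨hJj, hch, hne⟩
        have hc : hne.choose ∈ P.parts j := hne.choose_spec
        have hcD' : hne.choose ∈ D' := by
          have : hne.choose ∈ f j := by simp [f, dif_pos hne]
          exact Finset.mem_union_right _ (Finset.mem_biUnion.mpr ⟨j, hfS, this⟩)
        refine ⟨hne.choose, by simpa using hcD', ?_⟩
        by_cases hdt : hne.choose = t
        · exact Or.inl hdt
        · exact Or.inr (P.clique j hc hj hdt)
  have hk' : k ≤ D'.card := by
    rw [← hk]
    exact Nat.sInf_le ⟨D', rfl, hDomD'⟩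
  have hD'le : D'.card ≤ D.card + S.card := by
    refine (Finset.card_union_le _ _).trans (add_le_add le_rfl ?_)
    refine (Finset.card_biUnion_le).trans ?_
    calc ∑ j ∈ S, (f j).card ≤ ∑ _j ∈ S, 1 := by
          refine Finset.sum_le_sum fun j _ => ?_
          by_cases h : (P.parts j).Nonempty
          · simp [f, dif_pos h]
          · simp [f, dif_neg h]
      _ = S.card := by simp
  -- S, J, image I are pairwise disjoint
  have himcard : (Finset.univ.image I).card = l := by
    rw [Finset.card_image_of_injective _ hI, Finset.card_univ, Fintype.card_fin]
  have hSJ : Disjoint S J := by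
    rw [Finset.disjoint_left]
    intro j hjS hjJ
    exact ((Finset.mem_filter.mp hjS).2.1) hjJ
  have hSI : Disjoint S (Finset.univ.image I) := by
    rw [Finset.disjoint_left]
    intro j hjS hjI
    obtain ⟨a, _, ha⟩ := Finset.mem_image.mp hjI
    exact ((Finset.mem_filter.mp hjS).2.2.1) ⟨a, ha⟩
  have hJI : Disjoint J (Finset.univ.image I) := by
    rw [Finset.disjoint_left]
    intro j hjJ hjI
    obtain ⟨a, _, ha⟩ := Finset.mem_image.mp hjI
    have hne : (P.parts j ∩ D).Nonempty := by simpa [hJdef] using hjJ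
    obtain ⟨d, hd⟩ := hne
    have := (hDdisj a).le_bot (Finset.mem_inter.mpr
      ⟨(Finset.mem_inter.mp hd).2, ha ▸ (Finset.mem_inter.mp hd).1⟩)
    simpa using this
  have hcards : S.card + J.card + l ≤ k + n := by
    have h1 : (S ∪ J ∪ Finset.univ.image I).card
        = S.card + J.card + l := by
      rw [Finset.card_union_of_disjoint, Finset.card_union_of_disjoint hSJ, himcard]
      rw [Finset.disjoint_union_left]
      exact ⟨hSI, hJI⟩
    have h2 : (S ∪ J ∪ Finset.univ.image I).card ≤ k + n := by
      simpa using Finset.card_le_card (Finset.subset_univ (S ∪ J ∪ Finset.univ.image I))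
    omega
  have key : l + J.card ≤ D.card + n := by omega
  push_cast
  omega
end

section
/- Let G be a graph with γ(G) = k whose vertex set is partitioned into cliques C_1,...,C_{k+n}. Suppose D ⊆ V(G) dominates the union of l+t cliques of the partition, where D is disjoint from l of these cliques and meets exactly t of them (the cliques C_{j_1},...,C_{j_t}, so D ⊆ C_{j_1} ∪ ... ∪ C_{j_t}). Then there is no set E of vertices of G contained in the complement of these l+t cliques such that E dominates, and is disjoint from or meets, cliques of the partition outside the l+t, with total number of cliques dominated by E (those it is disjoint from plus those it intersects) equal to |D| + |E| + n − (l+t) + 1. In other words, the union D ∪ E together with one vertex from each clique not dominated by D ∪ E would yield a dominating set of G of size at most k − 1, a contradiction. -/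
open Finset

/-- `S` is restraining with avoided-and-dominated cliques indexed by `L` and met
cliques indexed by `T` (so `S` is `(|S|, |L|+|T|)`-restraining). -/
def IsRestrainingOn {V : Type*} [DecidableEq V] {G : SimpleGraph V} {m : ℕ}
    (P : CliquePartition G m) (S : Finset V) (L T : Finset (Fin m)) : Prop :=
  Disjoint L T ∧
  (∀ i ∈ L, Disjoint S (P.parts i)) ∧
  Dominates G ↑S ↑(L.biUnion P.parts) ∧
  (S ⊆ T.biUnion P.parts) ∧
  (∀ i ∈ T, (P.parts i ∩ S).Nonempty)

/-- Lemma 2: a `(|D|, l+t)`-restraining set `D` forbids, outside the `l+t` cliques it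
involves, any set `E` which is `(|E|, |D|+|E|+n-(l+t)+1)`-restraining. -/
theorem stmt3 {V : Type*} [Fintype V] [DecidableEq V] (G : SimpleGraph V) (k n : ℕ)
    (hk : domNum G = k) (P : CliquePartition G (k + n))
    (D : Finset V) (L T : Finset (Fin (k + n)))
    (hD : IsRestrainingOn P D L T) :
    ¬ ∃ (E : Finset V) (L' T' : Finset (Fin (k + n))),
        Disjoint (L' ∪ T') (L ∪ T) ∧
        (∀ v ∈ E, v ∉ (L ∪ T).biUnion P.parts) ∧
        IsRestrainingOn P E L' T' ∧
        (L'.card + T'.card : ℤ) = D.card + E.card + n - (L.card + T.card) + 1 := by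
  rintro ⟨E, L', T', hdisj, hEout, hE, hcard⟩
  obtain ⟨hLT, hDL, hDdom, hDsub, hDmeet⟩ := hD
  obtain ⟨hLT', hEL, hEdom, hEsub, hEmeet⟩ := hE
  classical
  set U : Finset (Fin (k + n)) := (L ∪ T) ∪ (L' ∪ T') with hU
  set S : Finset (Fin (k + n)) := Finset.univ \ U with hS
  set f : Fin (k + n) → Finset V :=
    fun i => if h : (P.parts i).Nonempty then {h.choose} else ∅ with hf
  set R : Finset V := S.biUnion f with hR
  set F : Finset V := D ∪ E ∪ R with hF
  -- F dominates everything
  have hdom : Dominates G ↑F Set.univ := by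
    intro v _
    obtain ⟨i, hv⟩ := P.cover v
    by_cases hiL : i ∈ L
    · obtain ⟨s, hsD, hs⟩ := hDdom v (by
        simpa using ⟨i, hiL, hv⟩)
      exact ⟨s, by simp [hF, hsD], hs⟩
    · by_cases hiT : i ∈ T
      · obtain ⟨s, hs⟩ := hDmeet i hiT
        rw [Finset.mem_inter] at hs
        rcases eq_or_ne s v with rfl | hne
        · exact ⟨s, by simp [hF, hs.2], Or.inl rfl⟩
        · exact ⟨s, by simp [hF, hs.2], Or.inr (P.clique i hs.1 hv hne)⟩
      · by_cases hiL' : i ∈ L'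
        · obtain ⟨s, hsE, hs⟩ := hEdom v (by simpa using ⟨i, hiL', hv⟩)
          exact ⟨s, by simp [hF, hsE], hs⟩
        · by_cases hiT' : i ∈ T'
          · obtain ⟨s, hs⟩ := hEmeet i hiT'
            rw [Finset.mem_inter] at hs
            rcases eq_or_ne s v with rfl | hne
            · exact ⟨s, by simp [hF, hs.2], Or.inl rfl⟩
            · exact ⟨s, by simp [hF, hs.2], Or.inr (P.clique i hs.1 hv hne)⟩
          · have hiS : i ∈ S := by
              simp [hS, hU, hiL, hiT, hiL', hiT']
            have hne : (P.parts i).Nonempty := ⟨v, hv⟩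
            set c := hne.choose with hc
            have hcmem : c ∈ P.parts i := hne.choose_spec
            have hcR : c ∈ R := by
              rw [hR, Finset.mem_biUnion]
              exact ⟨i, hiS, by simp [hf, dif_pos hne, hc]⟩
            rcases eq_or_ne c v with heq | hnev
            · exact ⟨c, by simp [hF, hcR], Or.inl heq⟩
            · exact ⟨c, by simp [hF, hcR], Or.inr (P.clique i hcmem hv hnev)⟩
  -- k ≤ |F|
  have hkF : k ≤ F.card := by
    rw [← hk, domNum]
    exact Nat.sInf_le ⟨F, rfl, hdom⟩
  -- card bounds
  have hRcard : R.card ≤ S.card := by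
    calc R.card ≤ ∑ i ∈ S, (f i).card := Finset.card_biUnion_le
    _ ≤ ∑ _i ∈ S, 1 := by
        apply Finset.sum_le_sum
        intro i _
        by_cases h : (P.parts i).Nonempty
        · simp [hf, dif_pos h]
        · simp [hf, dif_neg h]
    _ = S.card := by simp
  have hFcard : F.card ≤ D.card + E.card + R.card := by
    have h1 : F.card ≤ (D ∪ E).card + R.card := by
      rw [hF]; exact Finset.card_union_le _ _
    have h2 := Finset.card_union_le D E
    omega
  have hUcard : U.card = L.card + T.card + (L'.card + T'.card) := by
    rw [hU, Finset.card_union_of_disjoint hdisj.symm,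
      Finset.card_union_of_disjoint hLT, Finset.card_union_of_disjoint hLT']
  have hUle : U.card ≤ k + n := by
    simpa using Finset.card_le_card (Finset.subset_univ U)
  have hScard : S.card = (k + n) - U.card := by
    rw [hS, Finset.card_sdiff_of_subset (Finset.subset_univ U)]
    simp
  omega
end

section
/- For every graph G with clique covering number θ(G) equal to its domination number γ(G) (i.e., G is decomposable), and every graph H, γ(G □ H) ≥ γ(G)·γ(H). -/
open Finset

/-- The clique covering number: minimum number of cliques partitioning `V(G)`. -/
noncomputable def cliqueCoverNum {V : Type*} [Fintype V] (G : SimpleGraph V) : ℕ :=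
  sInf {m | Nonempty (CliquePartition G m)}

lemma domNum_le {V : Type*} [Fintype V] (G : SimpleGraph V) (D : Finset V)
    (hD : Dominates G ↑D Set.univ) : domNum G ≤ D.card :=
  Nat.sInf_le ⟨D, rfl, hD⟩

lemma domNum_spec {V : Type*} [Fintype V] (G : SimpleGraph V) :
    ∃ D : Finset V, D.card = domNum G ∧ Dominates G ↑D Set.univ := by
  have hne : {n | ∃ D : Finset V, D.card = n ∧ Dominates G ↑D Set.univ}.Nonempty :=
    ⟨(Finset.univ : Finset V).card, Finset.univ, rfl, fun t _ => ⟨t, by simp, Or.inl rfl⟩⟩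
  exact Nat.sInf_mem hne

lemma cliquePartition_spec {V : Type*} [Fintype V] (G : SimpleGraph V) :
    Nonempty (CliquePartition G (cliqueCoverNum G)) := by
  have hne : {m | Nonempty (CliquePartition G m)}.Nonempty := by
    refine ⟨Fintype.card V, ⟨⟨fun i => {(Fintype.equivFin V).symm i}, ?_, ?_, ?_⟩⟩⟩
    · intro i j hij
      simp only [Finset.disjoint_singleton_left, Finset.mem_singleton]
      exact fun h => hij (Equiv.injective _ h)
    · intro v; exact ⟨Fintype.equivFin V v, by simp⟩
    · intro i; simp [SimpleGraph.isClique_singleton]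
  exact Nat.sInf_mem hne

/-- Bartsalkin–German: decomposable graphs (`θ(G) = γ(G)`) satisfy Vizing's conjecture. -/
theorem stmt5 {V : Type*} [Fintype V] (G : SimpleGraph V)
    (hdec : cliqueCoverNum G = domNum G) :
    ∀ (W : Type) [Fintype W] (H : SimpleGraph W),
      domNum (G.boxProd H) ≥ domNum G * domNum H := by
  intro W _ H
  classical
  set k := domNum G with hk
  have hCP := cliquePartition_spec G
  rw [hdec] at hCP
  obtain ⟨CP⟩ := hCP
  obtain ⟨D, hDcard, hDdom⟩ := domNum_spec (G.boxProd H)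
  rw [ge_iff_le, ← hDcard]
  -- `L i h` : the column `D^h` dominates the clique `C_i` in `G`.
  set L : Fin k → W → Prop :=
    fun i h => ∀ g ∈ CP.parts i, ∃ s, (s, h) ∈ D ∧ (s = g ∨ G.Adj s g) with hLdef
  -- Key lemma: the number of cliques dominated by a column is at most the column size.
  have key : ∀ h : W,
      (univ.filter (fun i => L i h)).card ≤ (D.filter (fun p => p.2 = h)).card := by
    intro h
    set Dh : Finset V := (D.filter (fun p => p.2 = h)).image Prod.fst with hDh
    set B : Finset (Fin k) := univ.filter (fun i => ¬ L i h) with hB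
    set rep : Fin k → Finset V :=
      fun i => if hne : (CP.parts i).Nonempty then {hne.choose} else ∅ with hrep
    set S : Finset V := Dh ∪ B.biUnion rep with hS
    have hScard : S.card ≤ Dh.card + B.card := by
      refine le_trans (Finset.card_union_le _ _) ?_
      have : (B.biUnion rep).card ≤ ∑ i ∈ B, (rep i).card := Finset.card_biUnion_le
      refine Nat.add_le_add_left (le_trans this ?_) _
      have : ∀ i ∈ B, (rep i).card ≤ 1 := by
        intro i _
        by_cases hne : (CP.parts i).Nonempty <;> simp [hrep, hne]
      calc ∑ i ∈ B, (rep i).card ≤ ∑ i ∈ B, 1 := Finset.sum_le_sum this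
        _ = B.card := by simp
    have hSdom : Dominates G ↑S Set.univ := by
      intro v _
      obtain ⟨i, hvi⟩ := CP.cover v
      by_cases hLi : L i h
      · obtain ⟨s, hsD, hs⟩ := hLi v hvi
        refine ⟨s, ?_, hs⟩
        have : s ∈ Dh := Finset.mem_image.2 ⟨(s, h), Finset.mem_filter.2 ⟨hsD, rfl⟩, rfl⟩
        exact Finset.mem_coe.2 (Finset.mem_union_left _ this)
      · have hiB : i ∈ B := Finset.mem_filter.2 ⟨Finset.mem_univ _, hLi⟩
        have hne : (CP.parts i).Nonempty := ⟨v, hvi⟩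
        have hchoose : hne.choose ∈ CP.parts i := hne.choose_spec
        have hmem : hne.choose ∈ rep i := by simp [hrep, hne]
        refine ⟨hne.choose, ?_, ?_⟩
        · exact Finset.mem_coe.2 (Finset.mem_union_right _
            (Finset.mem_biUnion.2 ⟨i, hiB, hmem⟩))
        · by_cases hev : hne.choose = v
          · exact Or.inl hev
          · exact Or.inr (CP.clique i hchoose hvi hev)
    have hγ : k ≤ S.card := hk ▸ domNum_le G S hSdom
    have hsplit : (univ.filter (fun i => L i h)).card + B.card = k := by
      have := Finset.card_filter_add_card_filter_not
        (s := (univ : Finset (Fin k))) (p := fun i => L i h)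
      simpa using this
    have himg : Dh.card ≤ (D.filter (fun p => p.2 = h)).card := Finset.card_image_le
    omega
  -- Each `A_i = {h | L i h}` dominates `H`.
  have hA : ∀ i : Fin k, domNum H ≤ (univ.filter (fun h => L i h)).card := by
    intro i
    refine domNum_le H _ ?_
    intro h _
    by_cases hLi : L i h
    · exact ⟨h, by simpa using hLi, Or.inl rfl⟩
    · have hLi' : ¬ ∀ g ∈ CP.parts i, ∃ s, (s, h) ∈ D ∧ (s = g ∨ G.Adj s g) := hLi
      push_neg at hLi'
      obtain ⟨g, hgi, hg⟩ := hLi'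
      obtain ⟨p, hpD, hp⟩ := hDdom (g, h) (Set.mem_univ _)
      have hpD' : p ∈ D := Finset.mem_coe.1 hpD
      rcases hp with rfl | hadj
      · exact absurd rfl (hg g hpD').1
      · rw [SimpleGraph.boxProd_adj] at hadj
        rcases hadj with ⟨hadj1, hp2⟩ | ⟨hadj2, hp1⟩
        · refine absurd hadj1 (hg p.1 ?_).2
          have h2 : (p.1, p.2) ∈ D := by simpa using hpD'
          rwa [hp2] at h2
        · refine ⟨p.2, ?_, Or.inr hadj2⟩
          have hLp : L i p.2 := by
            intro g' hg'
            have h2 : (p.1, p.2) ∈ D := by simpa using hpD'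
            rw [hp1] at h2
            refine ⟨g, h2, ?_⟩
            by_cases hgg : g = g'
            · exact Or.inl hgg
            · exact Or.inr (CP.clique i hgi hg' hgg)
          simpa using hLp
  -- Double counting.
  calc k * domNum H = ∑ _i : Fin k, domNum H := by simp [mul_comm]
    _ ≤ ∑ i : Fin k, (univ.filter (fun h => L i h)).card := Finset.sum_le_sum fun i _ => hA i
    _ = ∑ h : W, (univ.filter (fun i => L i h)).card := by
        simp only [Finset.card_filter]
        exact Finset.sum_comm
    _ ≤ ∑ h : W, (D.filter (fun p => p.2 = h)).card := Finset.sum_le_sum fun h _ => key h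
    _ = D.card := (Finset.card_eq_sum_card_fiberwise (fun p _ => Finset.mem_univ p.2)).symm
end

section
/- Let G be a graph in class 𝒜₁. Then for every graph H, γ(G □ H) ≥ (γ(G) − √γ(G))·γ(H). -/
open Finset

/-- The class `𝒟ₙ`: `θ(G) = γ(G) + n` and `G` is not a spanning subgraph
(with equal domination number) of a graph in `𝒟ₘ` for `m < n`. -/
def InD {V : Type*} [Fintype V] (n : ℕ) (G : SimpleGraph V) : Prop :=
  cliqueCoverNum G = domNum G + n ∧
    ∀ m : ℕ, m < n → ∀ H : SimpleGraph V, G ≤ H → domNum G = domNum H → ¬ InD m H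
termination_by n

/-- The class `𝒜ₙ`: spanning subgraphs (with equal domination number) of graphs in `𝒟ₙ`. -/
def InA {V : Type*} [Fintype V] (n : ℕ) (G : SimpleGraph V) : Prop :=
  ∃ H : SimpleGraph V, G ≤ H ∧ domNum G = domNum H ∧ InD n H


open scoped Classical

/-- The fiber of a set `D ⊆ V × W` over `h : W`. -/
noncomputable def fiberAt {V W : Type*} (D : Finset (V × W)) (h : W) : Finset V :=
  (D.filter fun p => p.2 = h).image Prod.fst

/-- `v` is in the closed neighborhood of the finite set `X`. -/
def domBy {V : Type*} (K : SimpleGraph V) (X : Finset V) (v : V) : Prop :=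
  ∃ x ∈ X, x = v ∨ K.Adj x v

/-- The set of parts of the partition fully dominated by `X`. -/
noncomputable def fullSet {V : Type*} {K : SimpleGraph V} {n : ℕ}
    (CP : CliquePartition K n) (X : Finset V) : Finset (Fin n) :=
  Finset.univ.filter fun i => ∀ v ∈ CP.parts i, domBy K X v

lemma mem_fullSet {V : Type*} {K : SimpleGraph V} {n : ℕ}
    {CP : CliquePartition K n} {X : Finset V} {i : Fin n} :
    i ∈ fullSet CP X ↔ ∀ v ∈ CP.parts i, domBy K X v := by
  simp [fullSet]

lemma mem_fiberAt {V W : Type*} {D : Finset (V × W)} {h : W} {v : V} :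
    v ∈ fiberAt D h ↔ (v, h) ∈ D := by
  constructor
  · intro hv
    rw [fiberAt] at hv
    obtain ⟨p, hp, hpv⟩ := Finset.mem_image.1 hv
    have hp' := Finset.mem_filter.1 hp
    have : p = (v, h) := Prod.ext hpv hp'.2
    exact this ▸ hp'.1
  · intro hv
    rw [fiberAt]
    exact Finset.mem_image.2 ⟨(v, h), Finset.mem_filter.2 ⟨hv, rfl⟩, rfl⟩

lemma domBy_mono {V : Type*} {K : SimpleGraph V} {X Y : Finset V} (hXY : X ⊆ Y) {v : V}
    (h : domBy K X v) : domBy K Y v := by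
  obtain ⟨x, hx, h'⟩ := h
  exact ⟨x, hXY hx, h'⟩

/-- A vertex of a clique dominates the whole clique. -/
lemma clique_domBy {V : Type*} {K : SimpleGraph V} {n : ℕ} (CP : CliquePartition K n)
    {i : Fin n} {X : Finset V} {v : V}
    (hv : v ∈ X) (hvi : v ∈ CP.parts i) : ∀ u ∈ CP.parts i, domBy K X u := by
  intro u hu
  refine ⟨v, hv, ?_⟩
  rcases eq_or_ne v u with h | h
  · exact Or.inl h
  · exact Or.inr (CP.clique i (Finset.mem_coe.2 hvi) (Finset.mem_coe.2 hu) h)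

lemma card_as_sum {α : Type*} [Fintype α] (t : Finset α) :
    t.card = ∑ x : α, if x ∈ t then 1 else 0 := by
  rw [Finset.sum_ite_mem, Finset.univ_inter, Finset.card_eq_sum_ones]

section Aux

variable {V : Type*} [Fintype V]

lemma domSet_ne (G : SimpleGraph V) :
    {n | ∃ D : Finset V, D.card = n ∧ Dominates G ↑D Set.univ}.Nonempty :=
  ⟨(Finset.univ : Finset V).card, Finset.univ, rfl,
    fun t _ => ⟨t, by simp, Or.inl rfl⟩⟩

lemma exists_min_dom (G : SimpleGraph V) :
    ∃ D : Finset V, D.card = domNum G ∧ Dominates G ↑D Set.univ := by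
  have h : domNum G ∈ {n | ∃ D : Finset V, D.card = n ∧ Dominates G ↑D Set.univ} :=
    Nat.sInf_mem (domSet_ne G)
  obtain ⟨D, h1, h2⟩ := h
  exact ⟨D, h1, h2⟩

lemma domNum_le_card {G : SimpleGraph V} {S : Finset V}
    (h : Dominates G ↑S Set.univ) : domNum G ≤ S.card :=
  Nat.sInf_le ⟨S, rfl, h⟩

lemma ccSet_ne (G : SimpleGraph V) : {m | Nonempty (CliquePartition G m)}.Nonempty := by
  refine ⟨Fintype.card V, ⟨⟨fun i => {(Fintype.equivFin V).symm i}, ?_, ?_, ?_⟩⟩⟩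
  · intro i j hij
    simp only [Finset.disjoint_singleton]
    exact fun e => hij ((Fintype.equivFin V).symm.injective e)
  · intro v
    exact ⟨Fintype.equivFin V v, by simp⟩
  · intro i
    simp only [Finset.coe_singleton]
    exact fun a ha b hb hab => absurd (ha.trans hb.symm) hab

lemma exists_min_cp (G : SimpleGraph V) :
    Nonempty (CliquePartition G (cliqueCoverNum G)) :=
  Nat.sInf_mem (ccSet_ne G)

lemma cp_drop {G : SimpleGraph V} {m : ℕ} (CP : CliquePartition G (m + 1))
    (i₀ : Fin (m + 1)) (h0 : CP.parts i₀ = ∅) : Nonempty (CliquePartition G m) := by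
  refine ⟨⟨fun j => CP.parts (i₀.succAbove j), ?_, ?_, fun j => CP.clique _⟩⟩
  · intro a b hab
    exact CP.disj _ _ fun e => hab (Fin.succAbove_right_injective e)
  · intro v
    obtain ⟨i, hi⟩ := CP.cover v
    have hne : i ≠ i₀ := by
      rintro rfl
      rw [h0] at hi
      exact absurd hi (Finset.notMem_empty v)
    obtain ⟨j, hj⟩ := Fin.exists_succAbove_eq hne
    refine ⟨j, ?_⟩
    show v ∈ CP.parts (i₀.succAbove j)
    rw [hj]
    exact hi

lemma dominates_mono {V' : Type*} {G K : SimpleGraph V'} (hGK : G ≤ K) {S T : Set V'}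
    (h : Dominates G S T) : Dominates K S T := by
  intro t ht
  obtain ⟨s, hs, h'⟩ := h t ht
  exact ⟨s, hs, h'.imp_right fun ha => hGK ha⟩

lemma boxProd_mono {W : Type*} {G K : SimpleGraph V} (hGK : G ≤ K)
    (H : SimpleGraph W) : G.boxProd H ≤ K.boxProd H := by
  intro a b hab
  rw [SimpleGraph.boxProd_adj] at hab ⊢
  exact hab.imp (fun h => ⟨hGK h.1, h.2⟩) id

end Aux

section Engine

variable {V W : Type*} [Fintype V] [Fintype W] {K : SimpleGraph V} {H : SimpleGraph W}
  {k : ℕ}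

variable (CP : CliquePartition K (k + 1)) (hne : ∀ i, (CP.parts i).Nonempty)

/-- A transversal of a set of parts. -/
noncomputable def transv (s : Finset (Fin (k + 1))) : Finset V :=
  s.image fun i => (hne i).choose

/-- If `X` dominates all the parts outside `s`, then `X` plus a transversal of `s`
dominates everything. -/
lemma transv_dominates (X : Finset V) (s : Finset (Fin (k + 1)))
    (hcov : ∀ i ∉ s, ∀ v ∈ CP.parts i, domBy K X v) :
    Dominates K ↑(X ∪ transv CP hne s) Set.univ := by
  intro t _
  obtain ⟨i, hti⟩ := CP.cover t
  by_cases hi : i ∈ s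
  · have hch : (hne i).choose ∈ CP.parts i := (hne i).choose_spec
    have hmem : (hne i).choose ∈ X ∪ transv CP hne s :=
      Finset.mem_union_right _ (Finset.mem_image_of_mem _ hi)
    obtain ⟨x, hx, h'⟩ := clique_domBy CP hmem hch t hti
    exact ⟨x, Finset.mem_coe.2 hx, h'⟩
  · obtain ⟨x, hx, h'⟩ := hcov i hi t hti
    exact ⟨x, Finset.mem_coe.2 (Finset.mem_union_left _ hx), h'⟩

variable (hk : domNum K = k)

include hne hk in
lemma k_le_bound (X : Finset V) (s : Finset (Fin (k + 1)))
    (hcov : ∀ i ∉ s, ∀ v ∈ CP.parts i, domBy K X v) :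
    k ≤ X.card + s.card := by
  have h1 : domNum K ≤ (X ∪ transv CP hne s).card :=
    domNum_le_card (transv_dominates CP hne X s hcov)
  have h2 : (X ∪ transv CP hne s).card ≤ X.card + (transv CP hne s).card :=
    Finset.card_union_le _ _
  have h3 : (transv CP hne s).card ≤ s.card := Finset.card_image_le
  omega

include hne hk in
lemma fullSet_card_le (X : Finset V) : (fullSet CP X).card ≤ X.card + 1 := by
  have hcov : ∀ i ∉ Finset.univ \ fullSet CP X, ∀ v ∈ CP.parts i, domBy K X v := by
    intro i hi
    have hmem : i ∈ fullSet CP X := by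
      by_contra hcon
      exact hi (Finset.mem_sdiff.2 ⟨Finset.mem_univ i, hcon⟩)
    exact mem_fullSet.1 hmem
  have h1 := k_le_bound CP hne hk X _ hcov
  have h2 : (Finset.univ \ fullSet CP X).card = (k + 1) - (fullSet CP X).card := by
    rw [Finset.card_sdiff_of_subset (Finset.subset_univ _), Finset.card_fin]
  have h3 : (fullSet CP X).card ≤ k + 1 := by
    calc (fullSet CP X).card ≤ (Finset.univ : Finset (Fin (k+1))).card :=
          Finset.card_le_card (Finset.subset_univ _)
    _ = k + 1 := Finset.card_fin _
  omega

include hne hk in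
/-- The key structural lemma: two tight sets have intersecting full-sets. -/
lemma tight_inter (X₁ X₂ : Finset V)
    (h1 : (fullSet CP X₁).card = X₁.card + 1)
    (h2 : (fullSet CP X₂).card = X₂.card + 1) :
    ¬ Disjoint (fullSet CP X₁) (fullSet CP X₂) := by
  intro hdisj
  set F : Finset (Fin (k+1)) := fullSet CP X₁ ∪ fullSet CP X₂ with hF
  have hcov : ∀ i ∉ Finset.univ \ F, ∀ v ∈ CP.parts i, domBy K (X₁ ∪ X₂) v := by
    intro i hi v hv
    have hiF : i ∈ F := by
      by_contra hcon
      exact hi (Finset.mem_sdiff.2 ⟨Finset.mem_univ i, hcon⟩)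
    rcases Finset.mem_union.1 hiF with h | h
    · exact domBy_mono Finset.subset_union_left (mem_fullSet.1 h v hv)
    · exact domBy_mono Finset.subset_union_right (mem_fullSet.1 h v hv)
  have hkle := k_le_bound CP hne hk (X₁ ∪ X₂) (Finset.univ \ F) hcov
  have hcu : (X₁ ∪ X₂).card ≤ X₁.card + X₂.card := Finset.card_union_le _ _
  have hFcard : F.card = X₁.card + 1 + (X₂.card + 1) := by
    rw [hF, Finset.card_union_of_disjoint hdisj, h1, h2]
  have hFle : F.card ≤ k + 1 := by
    calc F.card ≤ (Finset.univ : Finset (Fin (k+1))).card :=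
          Finset.card_le_card (Finset.subset_univ _)
    _ = k + 1 := Finset.card_fin _
  have hs : (Finset.univ \ F).card = (k + 1) - F.card := by
    rw [Finset.card_sdiff_of_subset (Finset.subset_univ _), Finset.card_fin]
  omega

/-- The fibers at which part `i` is fully dominated. -/
noncomputable def azSet (D : Finset (V × W)) (i : Fin (k + 1)) : Finset W :=
  Finset.univ.filter fun h => ∀ v ∈ CP.parts i, domBy K (fiberAt D h) v

lemma mem_azSet {D : Finset (V × W)} {i : Fin (k + 1)} {h : W} :
    h ∈ azSet CP D i ↔ ∀ v ∈ CP.parts i, domBy K (fiberAt D h) v := by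
  simp [azSet]

lemma azSet_dominates (D : Finset (V × W))
    (hD : Dominates (K.boxProd H) ↑D Set.univ) (i : Fin (k + 1)) :
    Dominates H ↑(azSet CP D i) Set.univ := by
  intro t _
  by_cases hfull : ∀ v ∈ CP.parts i, domBy K (fiberAt D t) v
  · exact ⟨t, Finset.mem_coe.2 (mem_azSet CP |>.2 hfull), Or.inl rfl⟩
  · push_neg at hfull
    obtain ⟨v, hv, hnd⟩ := hfull
    obtain ⟨s, hs, hcase⟩ := hD (v, t) (Set.mem_univ _)
    have hsD : s ∈ D := Finset.mem_coe.1 hs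
    rcases hcase with heq | hadj
    · exfalso
      apply hnd
      refine ⟨v, mem_fiberAt.2 ?_, Or.inl rfl⟩
      rwa [← heq]
    · rw [SimpleGraph.boxProd_adj] at hadj
      rcases hadj with ⟨hKadj, h2⟩ | ⟨hHadj, h1⟩
      · exfalso
        apply hnd
        refine ⟨s.1, mem_fiberAt.2 ?_, Or.inr hKadj⟩
        have hseq : s = (s.1, t) := Prod.ext rfl h2
        rwa [← hseq]
      · have hvD : v ∈ fiberAt D s.2 := by
          apply mem_fiberAt.2
          have hseq : s = (v, s.2) := Prod.ext h1 rfl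
          rwa [← hseq]
        have hfull2 : ∀ u ∈ CP.parts i, domBy K (fiberAt D s.2) u :=
          clique_domBy CP hvD hv
        exact ⟨s.2, Finset.mem_coe.2 (mem_azSet CP |>.2 hfull2), Or.inr hHadj⟩

lemma az_double_count (D : Finset (V × W)) (S : Finset (Fin (k + 1))) :
    ∑ i ∈ S, (azSet CP D i).card
      = ∑ h : W, (fullSet CP (fiberAt D h) ∩ S).card := by
  have e1 : ∀ i ∈ S, (azSet CP D i).card = ∑ h : W, if h ∈ azSet CP D i then 1 else 0 :=
    fun i _ => card_as_sum _
  rw [Finset.sum_congr rfl e1, Finset.sum_comm]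
  refine Finset.sum_congr rfl fun h _ => ?_
  have e2 : ∀ i ∈ S, (if h ∈ azSet CP D i then (1:ℕ) else 0)
      = if i ∈ fullSet CP (fiberAt D h) then 1 else 0 := by
    intro i _
    have : (h ∈ azSet CP D i) ↔ (i ∈ fullSet CP (fiberAt D h)) := by
      rw [mem_azSet, mem_fullSet]
    simp [this]
  rw [Finset.sum_congr rfl e2]
  rw [Finset.sum_ite_mem, Finset.card_eq_sum_ones (fullSet CP (fiberAt D h) ∩ S),
    Finset.inter_comm]

lemma sum_fiber_card_le (D : Finset (V × W)) :
    ∑ h : W, (fiberAt D h).card ≤ D.card := by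
  have h1 : D.card = ∑ h : W, (D.filter fun p => p.2 = h).card :=
    Finset.card_eq_sum_card_fiberwise (fun x _ => Finset.mem_univ x.2)
  rw [h1]
  exact Finset.sum_le_sum fun h _ => Finset.card_image_le

end Engine

theorem key_bound {V W : Type*} [Fintype V] [Fintype W] (K : SimpleGraph V)
    (H : SimpleGraph W) (hθ : cliqueCoverNum K = domNum K + 1)
    (D : Finset (V × W)) (hD : Dominates (K.boxProd H) ↑D Set.univ) :
    ((domNum K : ℝ) - Real.sqrt (domNum K)) * (domNum H : ℝ) ≤ (D.card : ℝ) := by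
  set k := domNum K with hk
  obtain ⟨CP⟩ : Nonempty (CliquePartition K (k + 1)) := by
    have h := exists_min_cp K
    rwa [hθ] at h
  have hne : ∀ i, (CP.parts i).Nonempty := by
    intro i
    rw [Finset.nonempty_iff_ne_empty]
    intro h0
    obtain ⟨CP'⟩ := cp_drop CP i h0
    have hle : cliqueCoverNum K ≤ k := Nat.sInf_le ⟨CP'⟩
    omega
  have hV : Nonempty V := ⟨(hne 0).choose⟩
  have hk1 : 1 ≤ k := by
    by_contra hcon
    have hk0 : domNum K = 0 := by omega
    obtain ⟨D₀, hc, hd⟩ := exists_min_dom K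
    rw [hk0, Finset.card_eq_zero] at hc
    obtain ⟨v⟩ := hV
    obtain ⟨s, hs, -⟩ := hd v (Set.mem_univ v)
    rw [hc] at hs
    exact absurd hs (by simp)
  have hsq_pos : (0 : ℝ) < Real.sqrt k := Real.sqrt_pos.2 (by exact_mod_cast hk1)
  have hγH : (0 : ℝ) ≤ (domNum H : ℝ) := Nat.cast_nonneg _
  have hγle : ∀ i : Fin (k + 1), domNum H ≤ (azSet CP D i).card := fun i =>
    domNum_le_card (azSet_dominates CP D hD i)
  have hfull_le : ∀ h : W, (fullSet CP (fiberAt D h)).card ≤ (fiberAt D h).card + 1 :=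
    fun h => fullSet_card_le CP hne hk.symm (fiberAt D h)
  have hsumfib : ∑ h : W, (fiberAt D h).card ≤ D.card := sum_fiber_card_le D
  by_cases hA : ∀ X : Finset V, (fullSet CP X).card = X.card + 1 →
      Real.sqrt k ≤ (X.card : ℝ)
  · -- Case A: all tight sets are large
    have hperfiber : ∀ h : W, ((fullSet CP (fiberAt D h)).card : ℝ)
        ≤ (1 + (Real.sqrt k)⁻¹) * ((fiberAt D h).card : ℝ) := by
      intro h
      by_cases ht : (fullSet CP (fiberAt D h)).card = (fiberAt D h).card + 1
      · have hdk : Real.sqrt k ≤ ((fiberAt D h).card : ℝ) := hA _ ht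
        rw [ht]
        have h1 : (1 : ℝ) ≤ ((fiberAt D h).card : ℝ) * (Real.sqrt k)⁻¹ := by
          rw [← div_eq_mul_inv, le_div_iff₀ hsq_pos, one_mul]
          exact hdk
        push_cast
        nlinarith
      · have h2 : (fullSet CP (fiberAt D h)).card ≤ (fiberAt D h).card := by
          have h3 := hfull_le h
          omega
        have h3 : ((fullSet CP (fiberAt D h)).card : ℝ) ≤ ((fiberAt D h).card : ℝ) := by
          exact_mod_cast h2
        have h4 : (0:ℝ) ≤ ((fiberAt D h).card : ℝ) * (Real.sqrt k)⁻¹ := by positivity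
        nlinarith
    have hsum1 : (k + 1) * domNum H ≤ ∑ i : Fin (k + 1), (azSet CP D i).card := by
      calc (k + 1) * domNum H = ∑ _i : Fin (k + 1), domNum H := by
            rw [Finset.sum_const, Finset.card_fin, smul_eq_mul]
      _ ≤ ∑ i : Fin (k + 1), (azSet CP D i).card := Finset.sum_le_sum fun i _ => hγle i
    have hsum2 : ∑ i : Fin (k + 1), (azSet CP D i).card
        = ∑ h : W, (fullSet CP (fiberAt D h)).card := by
      rw [az_double_count CP D Finset.univ]
      exact Finset.sum_congr rfl fun h _ => by rw [Finset.inter_univ]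
    have hchain : (((k + 1) * domNum H : ℕ) : ℝ) ≤ (1 + (Real.sqrt k)⁻¹) * (D.card : ℝ) := by
      have c1 : ((k + 1) * domNum H : ℕ) ≤ ∑ h : W, (fullSet CP (fiberAt D h)).card := by
        rw [← hsum2]; exact hsum1
      have c2 : (((k+1) * domNum H : ℕ) : ℝ)
          ≤ ∑ h : W, ((fullSet CP (fiberAt D h)).card : ℝ) := by
        exact_mod_cast c1
      have c3 : ∑ h : W, ((fullSet CP (fiberAt D h)).card : ℝ)
          ≤ ∑ h : W, (1 + (Real.sqrt k)⁻¹) * ((fiberAt D h).card : ℝ) :=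
        Finset.sum_le_sum fun h _ => hperfiber h
      have c5 : ∑ h : W, ((fiberAt D h).card : ℝ) ≤ (D.card : ℝ) := by
        exact_mod_cast hsumfib
      have c6 : (0:ℝ) ≤ 1 + (Real.sqrt k)⁻¹ := by positivity
      calc (((k+1) * domNum H : ℕ) : ℝ)
          ≤ ∑ h : W, ((fullSet CP (fiberAt D h)).card : ℝ) := c2
      _ ≤ ∑ h : W, (1 + (Real.sqrt k)⁻¹) * ((fiberAt D h).card : ℝ) := c3
      _ = (1 + (Real.sqrt k)⁻¹) * ∑ h : W, ((fiberAt D h).card : ℝ) := by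
            rw [Finset.mul_sum]
      _ ≤ (1 + (Real.sqrt k)⁻¹) * (D.card : ℝ) := mul_le_mul_of_nonneg_left c5 c6
    have hmul : Real.sqrt k * Real.sqrt k = (k : ℝ) := Real.mul_self_sqrt (Nat.cast_nonneg k)
    have hfinal : ((k : ℝ) - Real.sqrt k) * (domNum H : ℝ) * (1 + (Real.sqrt k)⁻¹)
        ≤ (1 + (Real.sqrt k)⁻¹) * (D.card : ℝ) := by
      have expand : ((k : ℝ) - Real.sqrt k) * (1 + (Real.sqrt k)⁻¹) = (k : ℝ) - 1 := by
        field_simp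
        nlinarith [hmul]
      calc ((k : ℝ) - Real.sqrt k) * (domNum H : ℝ) * (1 + (Real.sqrt k)⁻¹)
          = (((k : ℝ) - Real.sqrt k) * (1 + (Real.sqrt k)⁻¹)) * (domNum H : ℝ) := by ring
      _ = ((k : ℝ) - 1) * (domNum H : ℝ) := by rw [expand]
      _ ≤ ((k : ℝ) + 1) * (domNum H : ℝ) := by nlinarith
      _ = (((k + 1) * domNum H : ℕ) : ℝ) := by push_cast; ring
      _ ≤ (1 + (Real.sqrt k)⁻¹) * (D.card : ℝ) := hchain
    have hpos : (0:ℝ) < 1 + (Real.sqrt k)⁻¹ := by positivity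
    have := (mul_le_mul_iff_of_pos_right hpos).1
      (by linarith [hfinal] :
        ((k : ℝ) - Real.sqrt k) * (domNum H : ℝ) * (1 + (Real.sqrt k)⁻¹)
          ≤ (D.card : ℝ) * (1 + (Real.sqrt k)⁻¹))
    exact this
  · -- Case B: a small tight set X exists
    push_neg at hA
    obtain ⟨X, hXtight, hXsmall⟩ := hA
    have hEcard : (fullSet CP X).card = X.card + 1 := hXtight
    have hEle : (fullSet CP X).card ≤ k + 1 := by
      calc (fullSet CP X).card ≤ (Finset.univ : Finset (Fin (k+1))).card :=
            Finset.card_le_card (Finset.subset_univ _)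
      _ = k + 1 := Finset.card_fin _
    have hXk : X.card ≤ k := by omega
    set S : Finset (Fin (k + 1)) := Finset.univ \ fullSet CP X with hS
    have hScard : S.card = k - X.card := by
      rw [hS, Finset.card_sdiff_of_subset (Finset.subset_univ _), Finset.card_fin, hEcard]
      omega
    have hperfiber : ∀ h : W,
        (fullSet CP (fiberAt D h) ∩ S).card ≤ (fiberAt D h).card := by
      intro h
      have heq : fullSet CP (fiberAt D h) ∩ S = fullSet CP (fiberAt D h) \ fullSet CP X := by
        rw [hS]
        ext i
        simp only [Finset.mem_inter, Finset.mem_sdiff, Finset.mem_univ, true_and]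
      rw [heq]
      have hsplit : (fullSet CP (fiberAt D h) \ fullSet CP X).card
          + (fullSet CP (fiberAt D h) ∩ fullSet CP X).card
          = (fullSet CP (fiberAt D h)).card :=
        Finset.card_sdiff_add_card_inter _ _
      by_cases ht : (fullSet CP (fiberAt D h)).card = (fiberAt D h).card + 1
      · have hint : ¬ Disjoint (fullSet CP (fiberAt D h)) (fullSet CP X) :=
          tight_inter CP hne hk.symm (fiberAt D h) X ht hXtight
        rw [Finset.not_disjoint_iff_nonempty_inter] at hint
        have h1 : 1 ≤ (fullSet CP (fiberAt D h) ∩ fullSet CP X).card :=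
          Finset.card_pos.2 hint
        omega
      · have h2 := hfull_le h
        omega
    have hsum1 : S.card * domNum H ≤ ∑ i ∈ S, (azSet CP D i).card := by
      calc S.card * domNum H = ∑ _i ∈ S, domNum H := by
            rw [Finset.sum_const, smul_eq_mul]
      _ ≤ ∑ i ∈ S, (azSet CP D i).card := Finset.sum_le_sum fun i _ => hγle i
    have hchain : S.card * domNum H ≤ D.card := by
      calc S.card * domNum H ≤ ∑ i ∈ S, (azSet CP D i).card := hsum1
      _ = ∑ h : W, (fullSet CP (fiberAt D h) ∩ S).card := az_double_count CP D S
      _ ≤ ∑ h : W, (fiberAt D h).card := Finset.sum_le_sum fun h _ => hperfiber h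
      _ ≤ D.card := hsumfib
    have hcast : ((S.card : ℕ) : ℝ) = (k : ℝ) - (X.card : ℝ) := by
      rw [hScard, Nat.cast_sub hXk]
    have h1 : ((k : ℝ) - Real.sqrt k) * (domNum H : ℝ)
        ≤ ((k : ℝ) - (X.card : ℝ)) * (domNum H : ℝ) := by
      apply mul_le_mul_of_nonneg_right _ hγH
      linarith [le_of_lt hXsmall]
    calc ((k : ℝ) - Real.sqrt k) * (domNum H : ℝ)
        ≤ ((k : ℝ) - (X.card : ℝ)) * (domNum H : ℝ) := h1
    _ = ((S.card : ℕ) : ℝ) * (domNum H : ℝ) := by rw [hcast]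
    _ ≤ (D.card : ℝ) := by exact_mod_cast hchain

/-- Main theorem -/
theorem stmt6 {V : Type*} [Fintype V] (G : SimpleGraph V) (hG : InA 1 G) :
    ∀ (W : Type) [Fintype W] (H : SimpleGraph W),
      (domNum (G.boxProd H) : ℝ) ≥
        ((domNum G : ℝ) - Real.sqrt (domNum G)) * domNum H := by
  obtain ⟨K, hle, hγeq, hInD⟩ := hG
  have hθ : cliqueCoverNum K = domNum K + 1 := by
    unfold InD at hInD
    exact hInD.1
  intro W _ H
  obtain ⟨D, hcard, hdom⟩ := exists_min_dom (G.boxProd H)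
  have hdom' : Dominates (K.boxProd H) ↑D Set.univ :=
    dominates_mono (boxProd_mono hle H) hdom
  have hkey := key_bound K H hθ D hdom'
  rw [ge_iff_le, hγeq, ← hcard]
  exact hkey
end

section
/- Let G be a graph with γ(G) = k and a clique partition C_1,...,C_{k+1} of V(G) (so G ∈ 𝒟₁). Suppose v ∈ C_1 is a vertex with C_1 ∪ C_2 ⊆ N[v]. Then the induced subgraph on C_3 ∪ ... ∪ C_{k+1} contains no set E of vertices that is disjoint from some collection of cliques among C_3,...,C_{k+1}, dominates them, and has excess at least 1 (i.e., dominates strictly more than |E| cliques of the partition in total, counting cliques it meets and cliques it dominates while avoiding). -/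
open Finset

/-- If `γ(G) = k`, `V(G)` is partitioned into `k+1` cliques, and `v ∈ C₁` satisfies
`C₁ ∪ C₂ ⊆ N[v]`, then `C₃ ∪ ⋯ ∪ C_{k+1}` contains no restraining set of
excess at least `1` among the cliques `C₃, …, C_{k+1}`. -/
theorem stmt13 {V : Type*} [Fintype V] [DecidableEq V] (G : SimpleGraph V) (k : ℕ)
    (hk : domNum G = k) (P : CliquePartition G (k + 1))
    (i₁ i₂ : Fin (k + 1)) (hne : i₁ ≠ i₂)
    (v : V) (hv : v ∈ P.parts i₁)
    (hdom : ∀ u ∈ P.parts i₁ ∪ P.parts i₂, u = v ∨ G.Adj v u) :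
    ¬ ∃ (E : Finset V) (L T : Finset (Fin (k + 1))),
        (∀ i ∈ L ∪ T, i ≠ i₁ ∧ i ≠ i₂) ∧
        (∀ w ∈ E, w ∉ P.parts i₁ ∪ P.parts i₂) ∧
        IsRestrainingOn P E L T ∧
        E.card + 1 ≤ L.card + T.card := by
  classical
  rintro ⟨E, L, T, hLT12, hE12, ⟨hLTdisj, hEavoid, hEdom, hEsub, hEmeet⟩, hexc⟩
  set X : Finset (Fin (k+1)) := L ∪ T ∪ {i₁, i₂} with hX
  set S' : Finset (Fin (k+1)) := Finset.univ \ X with hS'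
  set f : Fin (k+1) → Finset V := fun i =>
    if h : (P.parts i).Nonempty then {h.choose} else ∅ with hf
  set R := S'.biUnion f with hR
  set D := insert v (E ∪ R) with hD
  have hDdom : Dominates G ↑D Set.univ := by
    intro u _
    obtain ⟨j, hj⟩ := P.cover u
    by_cases h1 : j = i₁ ∨ j = i₂
    · refine ⟨v, by simp [hD], ?_⟩
      rcases hdom u (by rcases h1 with h | h <;> subst h <;>
        simp [Finset.mem_union, hj]) with h | h
      · exact Or.inl h.symm
      · exact Or.inr h
    push_neg at h1
    by_cases h2 : j ∈ L
    · obtain ⟨s, hs, hsu⟩ := hEdom u (by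
        simpa using Finset.mem_biUnion.mpr ⟨j, h2, hj⟩)
      exact ⟨s, by simp [hD]; right; left; simpa using hs, hsu⟩
    by_cases h3 : j ∈ T
    · obtain ⟨e, he⟩ := hEmeet j h3
      have heE : e ∈ E := (Finset.mem_inter.mp he).2
      have hej : e ∈ P.parts j := (Finset.mem_inter.mp he).1
      refine ⟨e, by simp [hD, heE], ?_⟩
      by_cases heu : e = u
      · exact Or.inl heu
      · exact Or.inr (P.clique j hej hj heu)
    · have hjS' : j ∈ S' := by simp [hS', hX, h1.1, h1.2, h2, h3]
      have hnej : (P.parts j).Nonempty := ⟨u, hj⟩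
      refine ⟨hnej.choose, ?_, ?_⟩
      · have hm : hnej.choose ∈ f j := by simp [hf, hnej]
        have : hnej.choose ∈ R := Finset.mem_biUnion.mpr ⟨j, hjS', hm⟩
        simp [hD]
        tauto
      · by_cases h : hnej.choose = u
        · exact Or.inl h
        · exact Or.inr (P.clique j hnej.choose_spec hj h)
  have hdle : domNum G ≤ D.card := Nat.sInf_le ⟨D, rfl, hDdom⟩
  have hRcard : R.card ≤ S'.card := by
    calc R.card ≤ ∑ i ∈ S', (f i).card := Finset.card_biUnion_le
    _ ≤ ∑ _i ∈ S', 1 := Finset.sum_le_sum (fun i _ => by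
        by_cases h : (P.parts i).Nonempty <;> simp [hf, h])
    _ = S'.card := by simp
  have hXcard : X.card = L.card + T.card + 2 := by
    have hd1 : Disjoint (L ∪ T) ({i₁, i₂} : Finset (Fin (k+1))) := by
      rw [Finset.disjoint_right]
      intro a ha haLT
      rcases Finset.mem_insert.mp ha with h | h
      · exact (hLT12 a haLT).1 h
      · exact (hLT12 a haLT).2 (Finset.mem_singleton.mp h)
    rw [hX, Finset.card_union_of_disjoint hd1,
      Finset.card_union_of_disjoint hLTdisj,
      Finset.card_insert_of_notMem (by simpa using hne), Finset.card_singleton]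
  have hXle : X.card ≤ k + 1 := by
    simpa using Finset.card_le_univ X
  have hS'card : S'.card = (k + 1) - X.card := by
    rw [hS', Finset.card_sdiff_of_subset (Finset.subset_univ X)]
    simp
  have hDcard : D.card ≤ 1 + E.card + R.card := by
    calc D.card ≤ (E ∪ R).card + 1 := Finset.card_insert_le _ _
    _ ≤ E.card + R.card + 1 := by
        exact Nat.add_le_add_right (Finset.card_union_le _ _) 1
    _ = 1 + E.card + R.card := by ring
  rw [hk] at hdle
  omega
end

section
/- If γ(G) − r > 0 and both γ(G □ H) ≥ (γ(G) − r)γ(H) and (r+1)/r · γ(G □ H) ≥ (γ(G)+1)γ(H) hold for the particular value r equal to the minimum restraint parameter, then γ(G □ H) ≥ min over 1 ≤ r ≤ γ(G) of max{(γ(G) − r)γ(H), (r/(r+1))(γ(G)+1)γ(H)} ≥ (γ(G) − √γ(G))γ(H). -/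
open Finset

/-- Combining the undercount bound `γ(G □ H) ≥ (γ(G) − r)γ(H)` and the overcount bound
`((r+1)/r)·γ(G □ H) ≥ (γ(G)+1)γ(H)` for the minimum restraint parameter `r` gives
`γ(G □ H) ≥ min_{1 ≤ r ≤ γ(G)} max{(γ(G) − r)γ(H), (r/(r+1))(γ(G)+1)γ(H)}
  ≥ (γ(G) − √γ(G))·γ(H)`. -/
theorem stmt18 {V W : Type*} [Fintype V] [Fintype W]
    (G : SimpleGraph V) (H : SimpleGraph W) (r : ℕ)
    (hr1 : 1 ≤ r) (hr2 : r ≤ domNum G) (hpos : (0 : ℝ) < (domNum G : ℝ) - r)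
    (h1 : (domNum (G.boxProd H) : ℝ) ≥ ((domNum G : ℝ) - r) * domNum H)
    (h2 : ((r + 1 : ℝ) / r) * domNum (G.boxProd H) ≥ ((domNum G : ℝ) + 1) * domNum H) :
    (∀ r' : ℕ, 1 ≤ r' → r' ≤ domNum G →
        max (((domNum G : ℝ) - r') * domNum H)
          ((r' : ℝ) / (r' + 1) * ((domNum G : ℝ) + 1) * domNum H) ≥
        ((domNum G : ℝ) - Real.sqrt (domNum G)) * domNum H) ∧
    (domNum (G.boxProd H) : ℝ) ≥
      ((domNum G : ℝ) - Real.sqrt (domNum G)) * domNum H := by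
  set g : ℝ := (domNum G : ℝ) with hg
  set k : ℝ := (domNum H : ℝ) with hk
  set D : ℝ := (domNum (G.boxProd H) : ℝ) with hD
  have hk0 : (0 : ℝ) ≤ k := Nat.cast_nonneg _
  have hg0 : (0 : ℝ) ≤ g := Nat.cast_nonneg _
  have hs0 : (0 : ℝ) ≤ Real.sqrt g := Real.sqrt_nonneg g
  have hs2 : Real.sqrt g * Real.sqrt g = g := Real.mul_self_sqrt hg0
  set s : ℝ := Real.sqrt g with hs
  have key : ∀ r' : ℕ, 1 ≤ r' → r' ≤ domNum G →
      max ((g - r') * k) ((r' : ℝ) / (r' + 1) * (g + 1) * k) ≥ (g - s) * k := by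
    intro r' hr1' hr2'
    have hr'pos : (0 : ℝ) < (r' : ℝ) := by exact_mod_cast hr1'
    rcases le_or_gt (r' : ℝ) s with hcase | hcase
    · refine le_trans ?_ (le_max_left _ _)
      have : g - s ≤ g - r' := by linarith
      exact mul_le_mul_of_nonneg_right this hk0
    · refine le_trans ?_ (le_max_right _ _)
      have hden : (0 : ℝ) < (r' : ℝ) + 1 := by linarith
      have hmain : g - s ≤ (r' : ℝ) / (r' + 1) * (g + 1) := by
        rw [div_mul_eq_mul_div, le_div_iff₀ hden]
        nlinarith [hs2, hs0, hcase]
      exact mul_le_mul_of_nonneg_right hmain hk0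
  refine ⟨key, ?_⟩
  have hrpos : (0 : ℝ) < (r : ℝ) := by exact_mod_cast hr1
  have hB : (r : ℝ) / (r + 1) * (g + 1) * k ≤ D := by
    have h2' : (g + 1) * k ≤ (r + 1 : ℝ) / r * D := h2
    have : (r : ℝ) / (r + 1) * ((g + 1) * k) ≤ (r : ℝ) / (r + 1) * ((r + 1 : ℝ) / r * D) := by
      apply mul_le_mul_of_nonneg_left h2'
      positivity
    calc (r : ℝ) / (r + 1) * (g + 1) * k = (r : ℝ) / (r + 1) * ((g + 1) * k) := by ring
      _ ≤ (r : ℝ) / (r + 1) * ((r + 1 : ℝ) / r * D) := this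
      _ = D := by field_simp
  exact le_trans (key r hr1 hr2) (max_le h1 hB)
end
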